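/- Let n ≥ 1, let p > 0 be a real number, and let L > 0. There is no smooth curve γ : ℝ → EuclideanSpace ℝ (Fin n) such that γ(s + L) = γ(s) for all s, ‖γ'(s)‖ = 1 for all s, γ''(s) ≠ 0 for all s, and the map s ↦ ‖γ''(s)‖^{p-2}·γ''(s) has vanishing second derivative at every s ∈ ℝ. -/

import Mathlib

open Real

/-- There is no closed (periodic) non-geodesic `p`-biharmonic curve in Euclidean space
parametrized by arclength. -/
theorem stmt_18 (n : ℕ) (hn : 1 ≤ n) (p : ℝ) (hp : 0 < p) (L : ℝ) (hL : 0 < L) :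
    ¬ ∃ γ : ℝ → EuclideanSpace ℝ (Fin n), ContDiff ℝ (⊤ : ℕ∞) γ ∧
      (∀ s, γ (s + L) = γ s) ∧ (∀ s, ‖deriv γ s‖ = 1) ∧
      (∀ s, deriv (deriv γ) s ≠ 0) ∧
      (∀ s, deriv (deriv
        (fun t => ‖deriv (deriv γ) t‖ ^ (p - 2) • deriv (deriv γ) t)) s = 0) := by
  rintro ⟨γ, hγ, hper, hunit, hne, hbh⟩
  -- smoothness
  have h0 : ContDiff ℝ ((⊤ : ℕ∞) : WithTop ℕ∞) γ := hγ
  have h1 : ContDiff ℝ ((⊤ : ℕ∞) : WithTop ℕ∞) (deriv γ) := (contDiff_infty_iff_deriv.mp h0).2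
  have hgd : Differentiable ℝ (deriv γ) := (contDiff_infty_iff_deriv.mp h1).1
  have h2 : ContDiff ℝ ((⊤ : ℕ∞) : WithTop ℕ∞) (deriv (deriv γ)) := (contDiff_infty_iff_deriv.mp h1).2
  set g : ℝ → EuclideanSpace ℝ (Fin n) := deriv (deriv γ) with hgdef
  -- periodicity of derivatives
  have hpd : ∀ f : ℝ → EuclideanSpace ℝ (Fin n), (∀ s, f (s + L) = f s) →
      ∀ s, deriv f (s + L) = deriv f s := by
    intro f hf s
    have hfun : (fun x => f (x + L)) = f := funext hf
    calc deriv f (s + L) = deriv (fun x => f (x + L)) s := (deriv_comp_add_const ..).symm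
      _ = deriv f s := by rw [hfun]
  have hper1 : ∀ s, deriv γ (s + L) = deriv γ s := hpd γ hper
  have hper2 : ∀ s, g (s + L) = g s := hpd _ hper1
  -- the map T
  set T : ℝ → EuclideanSpace ℝ (Fin n) := fun t => ‖g t‖ ^ (p - 2) • g t with hTdef
  have hTc : ContDiff ℝ ((⊤ : ℕ∞) : WithTop ℕ∞) T := by
    rw [contDiff_iff_contDiffAt]
    intro t
    exact ((h2.contDiffAt.norm ℝ (hne t)).rpow_const_of_ne
      (norm_ne_zero_iff.mpr (hne t))).smul h2.contDiffAt
  have hTd : Differentiable ℝ T := (contDiff_infty_iff_deriv.mp hTc).1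
  have hT'c : ContDiff ℝ ((⊤ : ℕ∞) : WithTop ℕ∞) (deriv T) := (contDiff_infty_iff_deriv.mp hTc).2
  have hT'd : Differentiable ℝ (deriv T) := (contDiff_infty_iff_deriv.mp hT'c).1
  -- deriv T is constant
  set d : EuclideanSpace ℝ (Fin n) := deriv T 0 with hddef
  have hconst : ∀ t, deriv T t = d := fun t => is_const_of_deriv_eq_zero hT'd hbh t 0
  -- T is affine
  have haff : ∀ t, T t = T 0 + t • d := by
    intro t
    have hder : ∀ s, HasDerivAt (fun u => T u - u • d) 0 s := by
      intro s
      have ha : HasDerivAt T d s := by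
        have := (hTd s).hasDerivAt
        rwa [hconst s] at this
      have hb : HasDerivAt (fun u : ℝ => u • d) d s := by
        simpa using (hasDerivAt_id s).smul_const d
      have := ha.sub hb; rwa [sub_self] at this
    have hcst : T t - t • d = T 0 - (0:ℝ) • d := by
      apply is_const_of_deriv_eq_zero (f := fun u => T u - u • d)
      · exact fun s => (hder s).differentiableAt
      · exact fun s => (hder s).deriv
    simp only [zero_smul, sub_zero] at hcst
    rw [← hcst]; abel
  -- d = 0, so T is constant
  have hTper : T L = T 0 := by
    have h := hper2 0
    have : T (0 + L) = T 0 := by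
      simp only [hTdef]; rw [h]
    simpa using this
  have hd0 : d = 0 := by
    have h := haff L
    rw [hTper] at h
    have hLd : L • d = 0 := (left_eq_add.mp h)
    rcases smul_eq_zero.mp hLd with h' | h'
    · exact absurd h' (ne_of_gt hL)
    · exact h'
  set c : EuclideanSpace ℝ (Fin n) := T 0 with hcdef
  have hTt : ∀ t, T t = c := by
    intro t
    rw [haff t, hd0]; simp
  have hnormpos : ∀ t, (0:ℝ) < ‖g t‖ ^ (p - 2) :=
    fun t => Real.rpow_pos_of_pos (norm_pos_iff.mpr (hne t)) _
  have hc0 : c ≠ 0 := by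
    have : T 0 = ‖g 0‖ ^ (p - 2) • g 0 := rfl
    rw [hcdef, this]
    exact smul_ne_zero (ne_of_gt (hnormpos 0)) (hne 0)
  -- inner product positivity
  have hinner : ∀ t, (0:ℝ) < @inner ℝ _ _ (g t) c := by
    intro t
    have h := hTt t
    have hgt : g t = (‖g t‖ ^ (p - 2))⁻¹ • c := by
      rw [← h]
      simp only [hTdef]
      rw [smul_smul, inv_mul_cancel₀ (ne_of_gt (hnormpos t)), one_smul]
    rw [hgt, real_inner_smul_left]
    have hcc : @inner ℝ _ _ c c = ‖c‖ ^ 2 := real_inner_self_eq_norm_sq c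
    rw [hcc]
    have h1 : (0:ℝ) < ‖c‖ := norm_pos_iff.mpr hc0
    exact mul_pos (inv_pos.mpr (hnormpos t)) (by positivity)
  -- strictly monotone periodic function: contradiction
  set ψ : ℝ → ℝ := fun t => @inner ℝ _ _ (deriv γ t) c with hψdef
  have hψder : ∀ t, HasDerivAt ψ (@inner ℝ _ _ (g t) c) t := by
    intro t
    have h1 : HasDerivAt (deriv γ) (g t) t := (hgd t).hasDerivAt
    have h2 : HasDerivAt (fun _ : ℝ => c) 0 t := hasDerivAt_const t c
    have := h1.inner ℝ h2
    simpa using this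
  have hmono : StrictMono ψ := by
    apply strictMono_of_deriv_pos
    intro t
    rw [(hψder t).deriv]
    exact hinner t
  have hψper : ψ L = ψ 0 := by
    have h := hper1 0
    simp only [hψdef]
    rw [show (L:ℝ) = 0 + L by ring, h]
  exact absurd hψper (ne_of_gt (hmono (by linarith : (0:ℝ) < L)))
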